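/- arXiv:1310.2213 — 3 statements merged into one kernel-verified Lean document; each statement's English description precedes it below -/
import Mathlib

section
/- Suppose v ∈ C¹ and p₁,…,p_m ∈ C⁰ satisfy, for all x ∈ X: ∇v(x)·f(x) + ū·Σᵢ pᵢ(x) ≤ β v(x), pᵢ(x) ≥ ∇v(x)·Gᵢ(x), pᵢ(x) ≥ 0, and v(x) ≥ 1 for x ∈ X_T. Then for any trajectory x(·) of ẋ = f(x) + G(x)u(t) with u(t) ∈ [0,ū]^m and x(t) ∈ X on [0,τ], and x(τ) ∈ X_T, one has v(x(0)) > 0. Hence the region of attraction X₀ is contained in {x : v(x) > 0}. -/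
open Set Real

/-- The region of attraction of the target set `XT` for the input-affine control
system `ẋ = f(x) + G(x)u`, with state constraint `X` and inputs `u(t) ∈ [0, ub]^m`. -/
def ROA {n m : ℕ} (f : EuclideanSpace ℝ (Fin n) → EuclideanSpace ℝ (Fin n))
    (G : EuclideanSpace ℝ (Fin n) → Fin m → EuclideanSpace ℝ (Fin n))
    (ub : ℝ) (X XT : Set (EuclideanSpace ℝ (Fin n))) :
    Set (EuclideanSpace ℝ (Fin n)) :=
  {x₀ | ∃ τ : ℝ, 0 ≤ τ ∧ ∃ u : ℝ → Fin m → ℝ, ∃ x : ℝ → EuclideanSpace ℝ (Fin n),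
    (∀ t ∈ Icc (0:ℝ) τ, HasDerivAt x (f (x t) + ∑ i, u t i • G (x t) i) t) ∧
    (∀ t ∈ Icc (0:ℝ) τ, x t ∈ X ∧ ∀ i, u t i ∈ Icc (0:ℝ) ub) ∧
    x 0 = x₀ ∧ x τ ∈ XT}

theorem outer_approximation_certificate
    {n m : ℕ} (f : EuclideanSpace ℝ (Fin n) → EuclideanSpace ℝ (Fin n))
    (G : EuclideanSpace ℝ (Fin n) → Fin m → EuclideanSpace ℝ (Fin n))
    (ub : ℝ) (hub : 0 ≤ ub)
    (X XT : Set (EuclideanSpace ℝ (Fin n))) (hXT : XT ⊆ X)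
    (v : EuclideanSpace ℝ (Fin n) → ℝ) (p : Fin m → EuclideanSpace ℝ (Fin n) → ℝ)
    (β : ℝ) (hβ : 0 < β)
    (hv : ContDiff ℝ 1 v) (hp : ∀ i, Continuous (p i))
    (hcert1 : ∀ y ∈ X, fderiv ℝ v y (f y) + ub * ∑ i, p i y ≤ β * v y)
    (hcert2 : ∀ y ∈ X, ∀ i, fderiv ℝ v y (G y i) ≤ p i y)
    (hcert3 : ∀ y ∈ X, ∀ i, 0 ≤ p i y)
    (hcert4 : ∀ y ∈ XT, 1 ≤ v y) :
    ROA f G ub X XT ⊆ {y | 0 < v y} := by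

  rintro x₀ ⟨τ, hτ, u, x, hx', hcons, hx0, hxτ⟩
  have hvd : Differentiable ℝ v := hv.differentiable one_ne_zero
  set g : ℝ → ℝ := fun t => v (x t) with hg
  have hgderiv : ∀ t ∈ Icc (0:ℝ) τ, HasDerivAt g
      (fderiv ℝ v (x t) (f (x t) + ∑ i, u t i • G (x t) i)) t := fun t ht =>
    (hvd (x t)).hasFDerivAt.comp_hasDerivAt t (hx' t ht)
  have hbound : ∀ t ∈ Icc (0:ℝ) τ,
      fderiv ℝ v (x t) (f (x t) + ∑ i, u t i • G (x t) i) ≤ β * g t := by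
    intro t ht
    obtain ⟨hxX, hu⟩ := hcons t ht
    have hlin : fderiv ℝ v (x t) (f (x t) + ∑ i, u t i • G (x t) i)
        = fderiv ℝ v (x t) (f (x t)) + ∑ i, u t i * fderiv ℝ v (x t) (G (x t) i) := by
      rw [map_add, map_sum]
      simp [smul_eq_mul]
    rw [hlin]
    have h1 : ∑ i, u t i * fderiv ℝ v (x t) (G (x t) i) ≤ ub * ∑ i, p i (x t) := by
      rw [Finset.mul_sum]
      apply Finset.sum_le_sum
      intro i _
      have hui := hu i
      calc u t i * fderiv ℝ v (x t) (G (x t) i) ≤ u t i * p i (x t) :=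
            mul_le_mul_of_nonneg_left (hcert2 _ hxX i) hui.1
        _ ≤ ub * p i (x t) := mul_le_mul_of_nonneg_right hui.2 (hcert3 _ hxX i)
    linarith [hcert1 (x t) hxX]
  set h : ℝ → ℝ := fun t => Real.exp (-β * t) * g t with hh
  have hhd : ∀ t ∈ Icc (0:ℝ) τ, HasDerivAt h
      ((-β) * Real.exp (-β*t) * g t
        + Real.exp (-β*t) * fderiv ℝ v (x t) (f (x t) + ∑ i, u t i • G (x t) i)) t := by
    intro t ht
    have he : HasDerivAt (fun s => Real.exp (-β*s)) ((-β) * Real.exp (-β*t)) t := by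
      simpa [mul_comm] using ((hasDerivAt_id t).const_mul (-β)).exp
    exact he.mul (hgderiv t ht)
  have hanti : AntitoneOn h (Icc 0 τ) := by
    apply antitoneOn_of_deriv_nonpos (convex_Icc 0 τ)
    · exact fun t ht => (hhd t ht).continuousAt.continuousWithinAt
    · intro t ht
      rw [interior_Icc] at ht
      exact ((hhd t (Ioo_subset_Icc_self ht)).differentiableAt).differentiableWithinAt
    · intro t ht
      rw [interior_Icc] at ht
      have ht' : t ∈ Icc (0:ℝ) τ := Ioo_subset_Icc_self ht
      rw [(hhd t ht').deriv]
      have hb := hbound t ht'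
      nlinarith [Real.exp_pos (-β*t)]
  have h0τ : h τ ≤ h 0 := hanti (left_mem_Icc.mpr hτ) (right_mem_Icc.mpr hτ) hτ
  have hτpos : 0 < h τ := by
    have : (1:ℝ) ≤ g τ := hcert4 _ hxτ
    have := Real.exp_pos (-β*τ)
    simp only [hh]
    nlinarith
  have h0 : h 0 = v x₀ := by simp [hh, hg, hx0]
  have : 0 < v x₀ := by rw [← h0]; linarith
  exact this
end

section
/- Let β > 0. Suppose v ∈ C¹ and w ∈ C⁰ satisfy: ∇v(x)·f̄(x) ≤ β v(x) for all x ∈ X_T^c, v(x) ≥ 0 for x ∈ X_∂, where X_T^c = {x : g_X(x) ≥ 0, g_T(x) ≤ 0} is compact and X_∂ = {x : g_X(x) = 0}. Then every x₀ ∈ X with v(x₀) < 0 belongs to the region of attraction X₀ of the system ẋ = f̄(x): i.e., the trajectory from x₀ stays in X = {g_X > 0} and reaches X_T = {g_T > 0} in finite time. Equivalently, {x ∈ X : v(x) < 0} ⊆ X₀. -/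
open Set Real

theorem inner_approximation_certificate
    {n : ℕ} (fbar : EuclideanSpace ℝ (Fin n) → EuclideanSpace ℝ (Fin n))
    (gX gT : EuclideanSpace ℝ (Fin n) → ℝ)
    (hgX : Continuous gX) (hgT : Continuous gT)
    (hXTsub : {y | 0 < gT y} ⊆ {y | 0 < gX y})
    (hcpt : IsCompact {y | 0 ≤ gX y ∧ gT y ≤ 0})
    (v : EuclideanSpace ℝ (Fin n) → ℝ) (hv : ContDiff ℝ 1 v)
    (β : ℝ) (hβ : 0 < β)
    (hcert1 : ∀ y, 0 ≤ gX y → gT y ≤ 0 → fderiv ℝ v y (fbar y) ≤ β * v y)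
    (hcert2 : ∀ y, gX y = 0 → 0 ≤ v y)
    -- the flow: a global forward solution from each initial condition
    (x : EuclideanSpace ℝ (Fin n) → ℝ → EuclideanSpace ℝ (Fin n))
    (hflow0 : ∀ x₀, x x₀ 0 = x₀)
    (hflow : ∀ x₀, ∀ t : ℝ, 0 ≤ t → HasDerivAt (x x₀) (fbar (x x₀ t)) t) :
    ∀ x₀, 0 < gX x₀ → v x₀ < 0 →
      ∃ τ : ℝ, 0 ≤ τ ∧ 0 < gT (x x₀ τ) ∧ ∀ t ∈ Icc (0:ℝ) τ, 0 < gX (x x₀ t) := by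
  intro x₀ hx₀X hvx₀
  by_cases hT0 : 0 < gT x₀
  · refine ⟨0, le_rfl, by rwa [hflow0], fun t ht => ?_⟩
    have : t = 0 := le_antisymm ht.2 ht.1
    rw [this, hflow0]; exact hx₀X
  push_neg at hT0
  set X : ℝ → EuclideanSpace ℝ (Fin n) := x x₀ with hXdef
  have hX0 : X 0 = x₀ := hflow0 x₀
  have hderiv : ∀ t : ℝ, 0 ≤ t →
      HasDerivAt (fun s => v (X s)) (fderiv ℝ v (X t) (fbar (X t))) t := fun t ht =>
    ((hv.differentiable one_ne_zero (X t)).hasFDerivAt).comp_hasDerivAt t (hflow x₀ t ht)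
  -- Gronwall-type bound while the trajectory stays in K = {gX ≥ 0, gT ≤ 0}
  have key : ∀ t, 0 ≤ t → (∀ s ∈ Icc (0:ℝ) t, 0 ≤ gX (X s) ∧ gT (X s) ≤ 0) →
      v (X t) ≤ Real.exp (β * t) * v x₀ := by
    intro t ht hK
    set g : ℝ → ℝ := fun s => Real.exp (-β * s) * v (X s) with hg
    have hgd : ∀ s : ℝ, 0 ≤ s → HasDerivAt g
        (Real.exp (-β * s) * (-β) * v (X s)
          + Real.exp (-β * s) * fderiv ℝ v (X s) (fbar (X s))) s := by
      intro s hs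
      have h1 : HasDerivAt (fun u : ℝ => -β * u) (-β) s := by
        simpa using (hasDerivAt_id s).const_mul (-β)
      have he : HasDerivAt (fun u => Real.exp (-β * u)) (Real.exp (-β * s) * (-β)) s :=
        (Real.hasDerivAt_exp (-β * s)).comp s h1
      exact he.mul (hderiv s hs)
    have anti : AntitoneOn g (Icc 0 t) := by
      apply antitoneOn_of_deriv_nonpos (convex_Icc 0 t)
      · exact fun s hs => (hgd s hs.1).continuousAt.continuousWithinAt
      · intro s hs
        rw [interior_Icc] at hs
        exact (hgd s hs.1.le).differentiableAt.differentiableWithinAt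
      · intro s hs
        rw [interior_Icc] at hs
        rw [(hgd s hs.1.le).deriv]
        have hKs := hK s ⟨hs.1.le, hs.2.le⟩
        have h1 := hcert1 (X s) hKs.1 hKs.2
        have hepos : 0 < Real.exp (-β * s) := Real.exp_pos _
        nlinarith [hepos]
    have hgt : g t ≤ g 0 := anti (left_mem_Icc.mpr ht) (right_mem_Icc.mpr ht) ht
    have h0 : g 0 = v x₀ := by simp [hg, hX0]
    rw [h0] at hgt
    have hprod : Real.exp (β * t) * Real.exp (-β * t) = 1 := by
      rw [← Real.exp_add]
      ring_nf
      exact Real.exp_zero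
    calc v (X t) = Real.exp (β * t) * (Real.exp (-β * t) * v (X t)) := by
          rw [← mul_assoc, hprod, one_mul]
      _ ≤ Real.exp (β * t) * v x₀ :=
          mul_le_mul_of_nonneg_left hgt (Real.exp_nonneg _)
  -- the set of times up to which the trajectory stays in K
  set A : Set ℝ := {t | 0 ≤ t ∧ ∀ s ∈ Icc (0:ℝ) t, 0 ≤ gX (X s) ∧ gT (X s) ≤ 0} with hA
  have h0A : (0:ℝ) ∈ A := by
    refine ⟨le_rfl, fun s hs => ?_⟩
    have : s = 0 := le_antisymm hs.2 hs.1
    rw [this, hX0]; exact ⟨hx₀X.le, hT0⟩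
  -- minimum of v on the compact set K
  obtain ⟨y₀, hy₀, hmin⟩ := hcpt.exists_isMinOn ⟨x₀, hx₀X.le, hT0⟩
    (hv.continuous.continuousOn)
  -- the Gronwall bound tends to -∞
  have htend : Filter.Tendsto (fun t => Real.exp (β * t) * v x₀) Filter.atTop Filter.atBot := by
    have h1 : Filter.Tendsto (fun t : ℝ => β * t) Filter.atTop Filter.atTop :=
      Filter.Tendsto.const_mul_atTop hβ Filter.tendsto_id
    exact (Real.tendsto_exp_atTop.comp h1).atTop_mul_const_of_neg hvx₀
  obtain ⟨T, hT⟩ := Filter.eventually_atTop.mp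
    (htend.eventually (Filter.eventually_lt_atBot (v y₀)))
  have hbdd : BddAbove A := by
    refine ⟨T, fun t htA => ?_⟩
    by_contra hlt
    push_neg at hlt
    have hvt := key t htA.1 htA.2
    have hXtK : X t ∈ {y | 0 ≤ gX y ∧ gT y ≤ 0} := htA.2 t ⟨htA.1, le_rfl⟩
    have h5 : v y₀ ≤ v (X t) := hmin hXtK
    have h6 := hT t hlt.le
    linarith
  set τ := sSup A with hτ
  have hτ0 : 0 ≤ τ := le_csSup hbdd h0A
  have hXc : ∀ t : ℝ, 0 ≤ t → ContinuousAt X t := fun t ht => (hflow x₀ t ht).continuousAt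
  have hmemIco : ∀ s ∈ Ico (0:ℝ) τ, 0 ≤ gX (X s) ∧ gT (X s) ≤ 0 := by
    intro s hs
    obtain ⟨t, htA, hst⟩ := exists_lt_of_lt_csSup ⟨0, h0A⟩ hs.2
    exact htA.2 s ⟨hs.1, hst.le⟩
  have hτA : τ ∈ A := by
    refine ⟨hτ0, fun s hs => ?_⟩
    rcases lt_or_eq_of_le hs.2 with hlt | heq
    · exact hmemIco s ⟨hs.1, hlt⟩
    · rw [heq]
      rcases eq_or_lt_of_le hτ0 with h0 | hτpos
      · rw [← h0, hX0]; exact ⟨hx₀X.le, hT0⟩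
      have hten1 : Filter.Tendsto (fun u => gX (X u)) (nhdsWithin τ (Iio τ))
          (nhds (gX (X τ))) :=
        ((hgX.continuousAt).comp (hXc τ hτ0)).tendsto.mono_left nhdsWithin_le_nhds
      have hten2 : Filter.Tendsto (fun u => gT (X u)) (nhdsWithin τ (Iio τ))
          (nhds (gT (X τ))) :=
        ((hgT.continuousAt).comp (hXc τ hτ0)).tendsto.mono_left nhdsWithin_le_nhds
      have hIco : Ico (0:ℝ) τ ∈ nhdsWithin τ (Iio τ) := by
        rw [← Ici_inter_Iio]
        exact Filter.inter_mem (nhdsWithin_le_nhds (Ici_mem_nhds hτpos)) self_mem_nhdsWithin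
      constructor
      · refine ge_of_tendsto (hten1) ?_
        exact Filter.eventually_of_mem hIco (fun u hu => (hmemIco u hu).1)
      · refine le_of_tendsto (hten2) ?_
        exact Filter.eventually_of_mem hIco (fun u hu => (hmemIco u hu).2)
  -- the trajectory stays strictly inside X up to time τ
  have hpos : ∀ s ∈ Icc (0:ℝ) τ, 0 < gX (X s) := by
    intro s hs
    rcases lt_or_eq_of_le (hτA.2 s hs).1 with h | h
    · exact h
    · exfalso
      have h2 : 0 ≤ v (X s) := hcert2 (X s) h.symm
      have h3 : v (X s) ≤ Real.exp (β * s) * v x₀ :=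
        key s hs.1 (fun u hu => hτA.2 u ⟨hu.1, hu.2.trans hs.2⟩)
      have h4 : Real.exp (β * s) * v x₀ < 0 := mul_neg_of_pos_of_neg (Real.exp_pos _) hvx₀
      linarith
  -- gX ∘ X stays positive a bit beyond τ
  have hc : ContinuousAt (fun s => gX (X s)) τ := (hgX.continuousAt).comp (hXc τ hτ0)
  have hev : ∀ᶠ s in nhds τ, 0 < gX (X s) := hc.eventually_const_lt (hpos τ ⟨hτ0, le_rfl⟩)
  obtain ⟨ε, hε, hball⟩ := Metric.eventually_nhds_iff.mp hev
  set δ := ε / 2 with hδ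
  have hδpos : 0 < δ := half_pos hε
  have hposext : ∀ s ∈ Icc (0:ℝ) (τ + δ), 0 < gX (X s) := by
    intro s hs
    rcases le_or_gt s τ with h | h
    · exact hpos s ⟨hs.1, h⟩
    · apply hball
      rw [Real.dist_eq, abs_of_pos (by linarith)]
      linarith [hs.2]
  have hnotA : τ + δ ∉ A := by
    intro hmem
    have : τ + δ ≤ τ := le_csSup hbdd hmem
    linarith
  have hnotA' : ¬ ((0:ℝ) ≤ τ + δ ∧
      ∀ s ∈ Icc (0:ℝ) (τ + δ), 0 ≤ gX (X s) ∧ gT (X s) ≤ 0) := hnotA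
  push_neg at hnotA'
  obtain ⟨s, hsmem, hsbad⟩ := hnotA' (by linarith)
  have hsgX : 0 ≤ gX (X s) := (hposext s hsmem).le
  have hsgT : 0 < gT (X s) := hsbad hsgX
  exact ⟨s, hsmem.1, hsgT, fun t ht => hposext t ⟨ht.1, ht.2.trans hsmem.2⟩⟩
end

section
/- Let μ₀ be a finite nonnegative Borel measure on X ⊆ ℝⁿ, τ : X → [0,∞] a measurable stopping time, and for each x₀ let x(·|x₀) be the trajectory of ẋ = f̄(x) remaining in X on [0,τ(x₀)). Define the discounted occupation measure μ(A) = ∫_X ∫₀^{τ(x₀)} e^{-βt} 1_A(x(t|x₀)) dt dμ₀(x₀) and the discounted final measure μ_T(A) = ∫_X e^{-βτ(x₀)} 1_A(x(τ(x₀)|x₀)) dμ₀(x₀) (with e^{-β·∞} := 0). Then for every v ∈ C¹(X): ∫ v dμ_T + β ∫ v dμ = ∫ v dμ₀ + ∫ ∇v·f̄ dμ (the discounted Liouville equation). -/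
open Set Real MeasureTheory ENNReal Filter

/-- An integrable function on `(0,∞)` which converges at `atTop` must converge to `0`. -/
private lemma aux_lim_zero {f : ℝ → ℝ} (hf : IntegrableOn f (Ioi (0:ℝ))) {L : ℝ}
    (hL : Filter.Tendsto f Filter.atTop (nhds L)) : L = 0 := by
  by_contra h
  have hev : ∀ᶠ t in Filter.atTop, |L| / 2 ≤ |f t| :=
    hL.abs.eventually (eventually_ge_nhds (half_lt_self (abs_pos.mpr h)))
  obtain ⟨M, hM⟩ := Filter.eventually_atTop.mp hev
  have h1 : IntegrableOn f (Ioi (max M 0)) :=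
    hf.mono_set (Ioi_subset_Ioi (le_max_right _ _))
  have h2 : Integrable (fun _ : ℝ => |L| / 2) (volume.restrict (Ioi (max M 0))) := by
    refine Integrable.mono h1 aestronglyMeasurable_const ?_
    refine (ae_restrict_iff' measurableSet_Ioi).2 (ae_of_all _ fun t ht => ?_)
    rw [Real.norm_eq_abs, Real.norm_eq_abs, abs_of_nonneg (by positivity)]
    exact hM t ((le_max_left M 0).trans ht.le)
  rw [integrable_const_iff] at h2
  rcases h2 with h2 | h2
  · have : |L| = 0 := by linarith
    exact h (abs_eq_zero.mp this)
  · have h2 := h2.measure_univ_lt_top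
    rw [Measure.restrict_apply_univ, Real.volume_Ioi] at h2
    exact (lt_irrefl _ h2)

/-- The discounted Liouville equation (equation (8) of the paper), with the discounted
occupation measure and discounted final measure unfolded into iterated integrals
against the initial measure `μ₀`.  The stopping time `τ` takes values in `[0,∞]`,
and `e^{-β·∞} := 0`. -/
theorem discounted_liouville
    {n : ℕ} (X : Set (EuclideanSpace ℝ (Fin n)))
    (fbar : EuclideanSpace ℝ (Fin n) → EuclideanSpace ℝ (Fin n))
    (β : ℝ) (hβ : 0 < β)
    (μ₀ : Measure (EuclideanSpace ℝ (Fin n))) [IsFiniteMeasure μ₀]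
    (hμ₀X : μ₀ Xᶜ = 0)
    (τ : EuclideanSpace ℝ (Fin n) → ℝ≥0∞) (hτ : Measurable τ)
    (x : EuclideanSpace ℝ (Fin n) → ℝ → EuclideanSpace ℝ (Fin n))
    (hx0 : ∀ x₀, x x₀ 0 = x₀)
    (hode : ∀ x₀, ∀ t : ℝ, 0 ≤ t → ENNReal.ofReal t ≤ τ x₀ →
      HasDerivAt (x x₀) (fbar (x x₀ t)) t)
    (hXtraj : ∀ x₀ ∈ X, ∀ t : ℝ, 0 ≤ t → ENNReal.ofReal t ≤ τ x₀ → x x₀ t ∈ X)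
    (v : EuclideanSpace ℝ (Fin n) → ℝ) (hv : ContDiff ℝ 1 v)
    -- integrability assumptions making all the integrals below well defined
    (hint1 : Integrable (fun x₀ =>
      ∫ t in {t : ℝ | 0 ≤ t ∧ ENNReal.ofReal t < τ x₀},
        Real.exp (-β * t) * v (x x₀ t)) μ₀)
    (hint2 : Integrable (fun x₀ =>
      ∫ t in {t : ℝ | 0 ≤ t ∧ ENNReal.ofReal t < τ x₀},
        Real.exp (-β * t) * fderiv ℝ v (x x₀ t) (fbar (x x₀ t))) μ₀)
    (hint3 : ∀ x₀ ∈ X, IntegrableOn (fun t =>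
        Real.exp (-β * t) * v (x x₀ t)) {t : ℝ | 0 ≤ t ∧ ENNReal.ofReal t < τ x₀})
    (hint4 : ∀ x₀ ∈ X, IntegrableOn (fun t =>
        Real.exp (-β * t) * fderiv ℝ v (x x₀ t) (fbar (x x₀ t)))
        {t : ℝ | 0 ≤ t ∧ ENNReal.ofReal t < τ x₀})
    (hint5 : Integrable (fun x₀ =>
      if τ x₀ = ⊤ then (0:ℝ)
      else Real.exp (-β * (τ x₀).toReal) * v (x x₀ (τ x₀).toReal)) μ₀)
    (hint6 : Integrable v μ₀) :
    (∫ x₀, (if τ x₀ = ⊤ then (0:ℝ)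
        else Real.exp (-β * (τ x₀).toReal) * v (x x₀ (τ x₀).toReal)) ∂μ₀)
    + β * ∫ x₀, (∫ t in {t : ℝ | 0 ≤ t ∧ ENNReal.ofReal t < τ x₀},
        Real.exp (-β * t) * v (x x₀ t)) ∂μ₀
    = (∫ x₀, v x₀ ∂μ₀)
    + ∫ x₀, (∫ t in {t : ℝ | 0 ≤ t ∧ ENNReal.ofReal t < τ x₀},
        Real.exp (-β * t) * fderiv ℝ v (x x₀ t) (fbar (x x₀ t))) ∂μ₀ := by
  have hvdiff : Differentiable ℝ v := hv.differentiable one_ne_zero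
  -- the derivative of the discounted value along a trajectory
  have hderiv : ∀ x₀, ∀ t : ℝ, 0 ≤ t → ENNReal.ofReal t ≤ τ x₀ →
      HasDerivAt (fun s => Real.exp (-β * s) * v (x x₀ s))
        (Real.exp (-β * t) * fderiv ℝ v (x x₀ t) (fbar (x x₀ t))
          - β * (Real.exp (-β * t) * v (x x₀ t))) t := by
    intro x₀ t ht hτt
    have h1 : HasDerivAt (fun s : ℝ => Real.exp (-β * s)) (Real.exp (-β * t) * (-β)) t := by
      simpa using ((hasDerivAt_id t).const_mul (-β)).exp
    have h2 : HasDerivAt (fun s => v (x x₀ s)) (fderiv ℝ v (x x₀ t) (fbar (x x₀ t))) t :=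
      (hvdiff (x x₀ t)).hasFDerivAt.comp_hasDerivAt t (hode x₀ t ht hτt)
    have : HasDerivAt (fun s => Real.exp (-β * s) * v (x x₀ s)) _ t := h1.mul h2
    convert this using 1
    ring
  -- the pointwise discounted fundamental theorem of calculus identity
  have key : ∀ x₀ ∈ X,
      (if τ x₀ = ⊤ then (0:ℝ)
        else Real.exp (-β * (τ x₀).toReal) * v (x x₀ (τ x₀).toReal))
      + β * (∫ t in {t : ℝ | 0 ≤ t ∧ ENNReal.ofReal t < τ x₀},
          Real.exp (-β * t) * v (x x₀ t))
      = v x₀ + ∫ t in {t : ℝ | 0 ≤ t ∧ ENNReal.ofReal t < τ x₀},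
          Real.exp (-β * t) * fderiv ℝ v (x x₀ t) (fbar (x x₀ t)) := by
    intro x₀ hx₀
    by_cases htop : τ x₀ = ⊤
    · -- infinite horizon
      have hS : {t : ℝ | 0 ≤ t ∧ ENNReal.ofReal t < τ x₀} = Ici (0:ℝ) := by
        ext t; simp [htop, ENNReal.ofReal_lt_top, mem_Ici]
      have h3 : IntegrableOn (fun t => Real.exp (-β * t) * v (x x₀ t)) (Ici (0:ℝ)) :=
        hS ▸ hint3 x₀ hx₀
      have h4 : IntegrableOn
          (fun t => Real.exp (-β * t) * fderiv ℝ v (x x₀ t) (fbar (x x₀ t))) (Ici (0:ℝ)) :=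
        hS ▸ hint4 x₀ hx₀
      have h3' : IntegrableOn (fun t => Real.exp (-β * t) * v (x x₀ t)) (Ioi (0:ℝ)) :=
        h3.mono_set Ioi_subset_Ici_self
      have h4' : IntegrableOn
          (fun t => Real.exp (-β * t) * fderiv ℝ v (x x₀ t) (fbar (x x₀ t))) (Ioi (0:ℝ)) :=
        h4.mono_set Ioi_subset_Ici_self
      have hG : IntegrableOn
          (fun t => Real.exp (-β * t) * fderiv ℝ v (x x₀ t) (fbar (x x₀ t))
            - β * (Real.exp (-β * t) * v (x x₀ t))) (Ioi (0:ℝ)) :=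
        h4'.sub (h3'.const_mul β)
      have hFTC : ∀ T : ℝ, 0 ≤ T →
          (∫ t in (0:ℝ)..T, (Real.exp (-β * t) * fderiv ℝ v (x x₀ t) (fbar (x x₀ t))
            - β * (Real.exp (-β * t) * v (x x₀ t))))
          = Real.exp (-β * T) * v (x x₀ T) - v x₀ := by
        intro T hT0
        have hint : IntervalIntegrable
            (fun t => Real.exp (-β * t) * fderiv ℝ v (x x₀ t) (fbar (x x₀ t))
              - β * (Real.exp (-β * t) * v (x x₀ t))) volume 0 T := by
          rw [intervalIntegrable_iff_integrableOn_Ioc_of_le hT0]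
          exact hG.mono_set Ioc_subset_Ioi_self
        have := intervalIntegral.integral_eq_sub_of_hasDerivAt
          (f := fun s => Real.exp (-β * s) * v (x x₀ s))
          (fun t ht => by
            rw [uIcc_of_le hT0] at ht
            exact hderiv x₀ t ht.1 (htop ▸ le_top)) hint
        rw [this]
        simp [hx0]
      have h5 : Tendsto (fun T => ∫ t in (0:ℝ)..T,
          (Real.exp (-β * t) * fderiv ℝ v (x x₀ t) (fbar (x x₀ t))
            - β * (Real.exp (-β * t) * v (x x₀ t)))) atTop
          (nhds (∫ t in Ioi (0:ℝ),
            (Real.exp (-β * t) * fderiv ℝ v (x x₀ t) (fbar (x x₀ t))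
              - β * (Real.exp (-β * t) * v (x x₀ t))))) :=
        intervalIntegral_tendsto_integral_Ioi 0 hG tendsto_id
      have h6 : Tendsto (fun T => Real.exp (-β * T) * v (x x₀ T)) atTop
          (nhds ((∫ t in Ioi (0:ℝ),
            (Real.exp (-β * t) * fderiv ℝ v (x x₀ t) (fbar (x x₀ t))
              - β * (Real.exp (-β * t) * v (x x₀ t)))) + v x₀)) := by
        refine (h5.add_const (v x₀)).congr' ?_
        filter_upwards [eventually_ge_atTop (0:ℝ)] with T hT
        rw [hFTC T hT]; ring
      have hzero := aux_lim_zero h3' h6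
      rw [integral_sub h4' (h3'.const_mul β), integral_const_mul β _] at hzero
      rw [hS, if_pos htop, integral_Ici_eq_integral_Ioi, integral_Ici_eq_integral_Ioi]
      linarith
    · -- finite horizon
      set T := (τ x₀).toReal with hTdef
      have hT0 : 0 ≤ T := ENNReal.toReal_nonneg
      have hτT : τ x₀ = ENNReal.ofReal T := (ENNReal.ofReal_toReal htop).symm
      have hS : {t : ℝ | 0 ≤ t ∧ ENNReal.ofReal t < τ x₀} = Ico 0 T := by
        ext t
        simp only [mem_setOf_eq, mem_Ico, hτT]
        exact and_congr_right fun h1 => ENNReal.ofReal_lt_ofReal_iff_of_nonneg h1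
      have h3 : IntegrableOn (fun t => Real.exp (-β * t) * v (x x₀ t)) (Ico 0 T) :=
        hS ▸ hint3 x₀ hx₀
      have h4 : IntegrableOn
          (fun t => Real.exp (-β * t) * fderiv ℝ v (x x₀ t) (fbar (x x₀ t))) (Ico 0 T) :=
        hS ▸ hint4 x₀ hx₀
      have h3' : IntegrableOn (fun t => Real.exp (-β * t) * v (x x₀ t)) (Ioc 0 T) := by
        rw [integrableOn_Ioc_iff_integrableOn_Ioo]
        exact ((integrableOn_Ico_iff_integrableOn_Ioo (a := (0:ℝ)) (b := T)).mp h3)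
      have h4' : IntegrableOn
          (fun t => Real.exp (-β * t) * fderiv ℝ v (x x₀ t) (fbar (x x₀ t))) (Ioc 0 T) := by
        rw [integrableOn_Ioc_iff_integrableOn_Ioo]
        exact ((integrableOn_Ico_iff_integrableOn_Ioo (a := (0:ℝ)) (b := T)).mp h4)
      have hint : IntervalIntegrable
          (fun t => Real.exp (-β * t) * fderiv ℝ v (x x₀ t) (fbar (x x₀ t))
            - β * (Real.exp (-β * t) * v (x x₀ t))) volume 0 T := by
        rw [intervalIntegrable_iff_integrableOn_Ioc_of_le hT0]
        exact h4'.sub (h3'.const_mul β)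
      have hFTC := intervalIntegral.integral_eq_sub_of_hasDerivAt
        (f := fun s => Real.exp (-β * s) * v (x x₀ s))
        (fun t ht => by
          rw [uIcc_of_le hT0] at ht
          exact hderiv x₀ t ht.1 (hτT ▸ ENNReal.ofReal_le_ofReal ht.2)) hint
      rw [intervalIntegral.integral_of_le hT0, integral_sub h4' (h3'.const_mul β),
        integral_const_mul β _] at hFTC
      simp only [hx0, mul_zero, Real.exp_zero, one_mul] at hFTC
      rw [hS, if_neg htop, integral_Ico_eq_integral_Ioo, integral_Ico_eq_integral_Ioo]
      rw [integral_Ioc_eq_integral_Ioo, integral_Ioc_eq_integral_Ioo] at hFTC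
      linarith
  -- integrate the pointwise identity over μ₀
  have hXae : ∀ᵐ x₀ ∂μ₀, x₀ ∈ X := by
    rw [ae_iff]
    simpa [compl_def] using hμ₀X
  have hae : ∀ᵐ x₀ ∂μ₀,
      (if τ x₀ = ⊤ then (0:ℝ)
        else Real.exp (-β * (τ x₀).toReal) * v (x x₀ (τ x₀).toReal))
      + β * (∫ t in {t : ℝ | 0 ≤ t ∧ ENNReal.ofReal t < τ x₀},
          Real.exp (-β * t) * v (x x₀ t))
      = v x₀ + ∫ t in {t : ℝ | 0 ≤ t ∧ ENNReal.ofReal t < τ x₀},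
          Real.exp (-β * t) * fderiv ℝ v (x x₀ t) (fbar (x x₀ t)) := by
    filter_upwards [hXae] with x₀ hx₀ using key x₀ hx₀
  rw [← integral_const_mul β _, ← integral_add hint5 (hint1.const_mul β),
    ← integral_add hint6 hint2]
  exact integral_congr_ae hae
end
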